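/- Let H be a complex Hilbert space, let P : H → H be a bounded self-adjoint operator, let A : H → H be a bounded operator, and let h > 0 and t ∈ ℝ. Define U(t) := exp(−(it/h) P). Then for every u ∈ H one has ‖A U(t) u‖ ≤ ‖A u‖ + (‖A‖ |t| / h) ‖P u − u‖, where ‖A‖ denotes the operator norm of A. -/

import Mathlib

open NormedSpace

set_option maxHeartbeats 1000000
set_option synthInstance.maxHeartbeats 1000000

/-- Key estimate: for a skew-adjoint bounded operator `M` on a Hilbert space,
`‖exp M u - u‖ ≤ ‖M u‖`. -/
lemma exp_skewAdjoint_sub_one_apply_norm_le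
    {H : Type*} [NormedAddCommGroup H] [InnerProductSpace ℂ H] [CompleteSpace H]
    (M : H →L[ℂ] H) (hM : M ∈ skewAdjoint (H →L[ℂ] H)) (u : H) :
    ‖(exp M) u - u‖ ≤ ‖M u‖ := by
  have key : ∀ x : ℝ, (x • M) ∈ skewAdjoint (H →L[ℂ] H) := fun x => by
    rw [skewAdjoint.mem_iff, star_smul, skewAdjoint.mem_iff.mp hM, star_trivial, smul_neg]
  set g : ℝ → H := fun x => (exp (x • M)) u with hg
  have hderiv : ∀ x : ℝ, HasDerivAt g ((exp (x • M)) (M u)) x := by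
    intro x
    have h1 : HasDerivAt (fun y : ℝ => exp (y • M)) (exp (x • M) * M) x :=
      hasDerivAt_exp_smul_const M x
    have h2 := (((ContinuousLinearMap.apply ℂ H u).restrictScalars
        ℝ).hasFDerivAt).comp_hasDerivAt x h1
    simpa [hg, Function.comp_def, ContinuousLinearMap.mul_apply] using h2
  have hbound : ∀ x : ℝ, ‖(exp (x • M)) (M u)‖ ≤ ‖M u‖ := by
    intro x
    let +nondep : NormedAlgebra ℚ (H →L[ℂ] H) := .restrictScalars ℚ ℂ _
    have hu : exp (x • M) ∈ unitary (H →L[ℂ] H) :=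
      exp_mem_unitary_of_mem_skewAdjoint (key x)
    rw [ContinuousLinearMap.norm_map_of_mem_unitary hu]
  have := (convex_Icc (0:ℝ) 1).norm_image_sub_le_of_norm_hasDerivWithin_le
    (f := g) (f' := fun x => (exp (x • M)) (M u)) (C := ‖M u‖)
    (fun x _ => (hderiv x).hasDerivWithinAt) (fun x _ => hbound x)
    (Set.left_mem_Icc.mpr zero_le_one) (Set.right_mem_Icc.mpr zero_le_one)
  have hg1 : g 1 = (exp M) u := by
    simp [hg]
  have hg0 : g 0 = u := by simp [hg]
  rw [hg1, hg0] at this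
  simpa using this

/-- **Control of propagated states** (abstract content of Lemma 2.2 of the paper).
Let `H` be a complex Hilbert space, `P : H → H` a bounded self-adjoint operator,
`A : H → H` a bounded operator, `h > 0`, `t ∈ ℝ`, and `U(t) = exp (-(i t / h) P)`.
Then for every `u ∈ H`,
`‖A (U(t) u)‖ ≤ ‖A u‖ + (‖A‖ * |t| / h) * ‖P u - u‖`. -/
theorem control_of_propagated_state
    {H : Type*} [NormedAddCommGroup H] [InnerProductSpace ℂ H] [CompleteSpace H]
    (P : H →L[ℂ] H) (hP : IsSelfAdjoint P) (A : H →L[ℂ] H)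
    (h t : ℝ) (hh : 0 < h) (u : H) :
    ‖A ((NormedSpace.exp (((-(t / h) : ℂ) * Complex.I) • P)) u)‖
      ≤ ‖A u‖ + (‖A‖ * |t| / h) * ‖P u - u‖ := by
  set c : ℂ := (-(t / h) : ℂ) * Complex.I with hc
  set M : H →L[ℂ] H := c • (P - 1) with hM
  -- M is skew-adjoint
  have hMsa : M ∈ skewAdjoint (H →L[ℂ] H) := by
    rw [skewAdjoint.mem_iff, hM, star_smul]
    have h1 : star (P - 1) = P - 1 := by
      simp [star_sub, hP.star_eq]
    rw [h1]
    have : star c = -c := by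
      simp [hc, Complex.ext_iff]
    rw [this, neg_smul]
  -- split the exponential
  let +nondep : NormedAlgebra ℚ (H →L[ℂ] H) := .restrictScalars ℚ ℂ _
  have hsplit : exp (c • P) = exp (c • (1 : H →L[ℂ] H)) * exp M := by
    rw [← exp_add_of_commute]
    · congr 1
      rw [hM, ← smul_add]
      congr 1
      abel
    · exact (Commute.one_left (P - 1)).smul_left c |>.smul_right c
  have hscal : exp (c • (1 : H →L[ℂ] H)) = Complex.exp c • (1 : H →L[ℂ] H) := by
    rw [← Algebra.algebraMap_eq_smul_one, ← algebraMap_exp_comm,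
      ← Algebra.algebraMap_eq_smul_one, Complex.exp_eq_exp_ℂ]
  have habs : ‖Complex.exp c‖ = 1 := by
    rw [Complex.norm_exp]
    have : c.re = 0 := by simp [hc]
    rw [this, Real.exp_zero]
  -- norm of A applied to propagated state
  have step1 : ‖A ((exp (c • P)) u)‖ = ‖A ((exp M) u)‖ := by
    rw [hsplit]
    simp only [ContinuousLinearMap.mul_apply, hscal, ContinuousLinearMap.smul_apply,
      ContinuousLinearMap.one_apply, map_smul, norm_smul, habs, one_mul]
  rw [step1]
  -- triangle inequality
  have tri : ‖A ((exp M) u)‖ ≤ ‖A u‖ + ‖A‖ * ‖(exp M) u - u‖ := by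
    have heq : A ((exp M) u) = A u + A ((exp M) u - u) := by
      rw [map_sub]; abel
    calc ‖A ((exp M) u)‖ = ‖A u + A ((exp M) u - u)‖ := by rw [← heq]
    _ ≤ ‖A u‖ + ‖A ((exp M) u - u)‖ := norm_add_le _ _
    _ ≤ ‖A u‖ + ‖A‖ * ‖(exp M) u - u‖ := by
        gcongr; exact A.le_opNorm _
  have key := exp_skewAdjoint_sub_one_apply_norm_le M hMsa u
  have hMu : ‖M u‖ = (|t| / h) * ‖P u - u‖ := by
    have h2 : (P - 1 : H →L[ℂ] H) u = P u - u := by simp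
    rw [hM, ContinuousLinearMap.smul_apply, h2, norm_smul]
    congr 1
    simp [hc, abs_div, abs_of_pos hh]
  calc ‖A ((exp M) u)‖ ≤ ‖A u‖ + ‖A‖ * ‖(exp M) u - u‖ := tri
  _ ≤ ‖A u‖ + ‖A‖ * ‖M u‖ := by gcongr
  _ = ‖A u‖ + (‖A‖ * |t| / h) * ‖P u - u‖ := by rw [hMu]; ring
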